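/- Let {w_k}, {p_k}, {q_k} be sequences of nonnegative real numbers with w_{k+1} ≤ (1 + p_k) w_k + q_k for all k, ∑ p_k < ∞ and ∑ q_k < ∞. Then the sequence {w_k} converges. -/

import Mathlib

open Filter

theorem stmt_1 (w p q : ℕ → ℝ)
    (hw : ∀ k, 0 ≤ w k) (hp : ∀ k, 0 ≤ p k) (hq : ∀ k, 0 ≤ q k)
    (hrec : ∀ k, w (k + 1) ≤ (1 + p k) * w k + q k)
    (hps : Summable p) (hqs : Summable q) :
    ∃ L : ℝ, Tendsto w atTop (nhds L) := by
  set P : ℕ → ℝ := fun k => ∏ j ∈ Finset.range k, (1 + p j) with hPdef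
  have hPsucc : ∀ k, P (k + 1) = P k * (1 + p k) := fun k =>
    Finset.prod_range_succ _ _
  have hP1 : ∀ k, 1 ≤ P k := by
    intro k
    induction k with
    | zero => simp [hPdef]
    | succ n ih => rw [hPsucc n]; nlinarith [hp n]
  have hPpos : ∀ k, 0 < P k := fun k => lt_of_lt_of_le one_pos (hP1 k)
  have hPmono : Monotone P := monotone_nat_of_le_succ (fun k => by
    rw [hPsucc k]; nlinarith [hPpos k, hp k])
  have hPbdd : ∀ k, P k ≤ Real.exp (∑' j, p j) := by
    intro k
    calc P k ≤ ∏ j ∈ Finset.range k, Real.exp (p j) := by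
          apply Finset.prod_le_prod (fun j _ => by linarith [hp j])
          intro j _
          rw [add_comm]; exact Real.add_one_le_exp (p j)
      _ = Real.exp (∑ j ∈ Finset.range k, p j) := (Real.exp_sum _ _).symm
      _ ≤ Real.exp (∑' j, p j) :=
          Real.exp_le_exp.mpr (Summable.sum_le_tsum _ (fun j _ => hp j) hps)
  obtain hPtop | ⟨Pl, hPl⟩ := tendsto_of_monotone hPmono
  · exfalso
    obtain ⟨k, hk⟩ := (tendsto_atTop.mp hPtop (Real.exp (∑' j, p j) + 1)).exists
    linarith [hPbdd k]
  set v : ℕ → ℝ := fun k => w k / P k with hvdef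
  have hvstep : ∀ k, v (k + 1) ≤ v k + q k := by
    intro k
    have h1 : v (k + 1) ≤ ((1 + p k) * w k + q k) / P (k + 1) := by
      apply div_le_div_of_nonneg_right (hrec k) (hPpos (k + 1)).le
    have h2 : ((1 + p k) * w k + q k) / P (k + 1) = w k / P k + q k / P (k + 1) := by
      have hne : (1 + p k) ≠ 0 := by linarith [hp k]
      rw [hPsucc k, add_div, mul_comm (1 + p k) (w k), mul_div_mul_right _ _ hne]
    have h3 : q k / P (k + 1) ≤ q k :=
      div_le_self (hq k) (hP1 (k + 1))
    calc v (k + 1) ≤ w k / P k + q k / P (k + 1) := by rw [← h2]; exact h1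
      _ ≤ v k + q k := by show w k / P k + q k / P (k + 1) ≤ w k / P k + q k; linarith
  set a : ℕ → ℝ := fun k => v k - ∑ j ∈ Finset.range k, q j with hadef
  have haanti : Antitone a := antitone_nat_of_succ_le (fun k => by
    have := hvstep k
    simp only [hadef, Finset.sum_range_succ]
    linarith)
  have habdd : ∀ k, -(∑' j, q j) ≤ a k := by
    intro k
    have h1 : (0:ℝ) ≤ v k := div_nonneg (hw k) (hPpos k).le
    have h2 : ∑ j ∈ Finset.range k, q j ≤ ∑' j, q j :=
      Summable.sum_le_tsum _ (fun j _ => hq j) hqs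
    simp only [hadef]; linarith
  obtain habot | ⟨A, hA⟩ := tendsto_of_antitone haanti
  · exfalso
    obtain ⟨k, hk⟩ := (tendsto_atBot.mp habot (-(∑' j, q j) - 1)).exists
    linarith [habdd k]
  have hqsum : Tendsto (fun k => ∑ j ∈ Finset.range k, q j) atTop (nhds (∑' j, q j)) :=
    hqs.hasSum.tendsto_sum_nat
  have hvlim : Tendsto v atTop (nhds (A + ∑' j, q j)) := by
    have : Tendsto (fun k => a k + ∑ j ∈ Finset.range k, q j) atTop
        (nhds (A + ∑' j, q j)) := hA.add hqsum
    refine this.congr (fun k => ?_)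
    simp [hadef]
  have hwlim : Tendsto w atTop (nhds ((A + ∑' j, q j) * Pl)) := by
    have := hvlim.mul hPl
    refine this.congr (fun k => ?_)
    simp only [hvdef]
    exact div_mul_cancel₀ _ (hPpos k).ne'
  exact ⟨_, hwlim⟩
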